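/- Privacy of Shamir secret sharing: for any secret s in a finite field F and any set of fewer than t distinct nonzero evaluation points, the joint distribution of the corresponding shares (when the t−1 non-constant coefficients of the degree-< t polynomial are chosen uniformly at random) is uniform on F^{|J|} and in particular independent of s. -/

import Mathlib

open Finset

-- All fibers of a surjective additive hom have the same cardinality.
lemma fiber_card_mul {α β : Type*} [AddCommGroup α] [AddCommGroup β]
    [Fintype α] [Fintype β] [DecidableEq β]
    (L : α →+ β) (hs : Function.Surjective L) (b : β) :
    ({a : α | L a = b} : Finset α).card * Fintype.card β = Fintype.card α := by
  have hcard : ∀ b' : β, ({a : α | L a = b'} : Finset α).card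
      = ({a : α | L a = b} : Finset α).card := by
    intro b'
    obtain ⟨c, hc⟩ := hs b
    obtain ⟨c', hc'⟩ := hs b'
    apply Finset.card_nbij' (i := fun a => a + (c - c')) (j := fun a => a + (c' - c))
    · intro a ha
      have h2 := (Finset.mem_filter.mp ha).2
      simp only [Finset.mem_coe, Finset.mem_filter, Finset.mem_univ, true_and]
      simp [map_add, map_sub, h2, hc, hc']
    · intro a ha
      have h2 := (Finset.mem_filter.mp ha).2
      simp only [Finset.mem_coe, Finset.mem_filter, Finset.mem_univ, true_and]
      simp [map_add, map_sub, h2, hc, hc']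
    · intro a _; simp only [add_assoc, sub_add_sub_cancel, sub_self, add_zero]
    · intro a _; simp only [add_assoc, sub_add_sub_cancel, sub_self, add_zero]
  have htot := Finset.card_eq_sum_card_fiberwise
    (f := fun a : α => L a) (s := Finset.univ) (t := Finset.univ)
    (fun a _ => Finset.mem_univ _)
  rw [Finset.card_univ] at htot
  rw [htot, Finset.sum_congr rfl (fun b' _ => hcard b'), Finset.sum_const, Finset.card_univ,
    smul_eq_mul, mul_comm]

theorem shamir_privacy {F : Type*} [Field F] [Fintype F] [DecidableEq F]
    (t : ℕ) (ht : 1 ≤ t) (m : ℕ) (hm : m ≤ t - 1)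
    (x : Fin m → F) (hinj : Function.Injective x) (hx0 : ∀ j, x j ≠ 0)
    (s : F) :
    PMF.map
        (fun a : Fin (t - 1) → F =>
          fun j : Fin m => s + ∑ i : Fin (t - 1), a i * x j ^ ((i : ℕ) + 1))
        (PMF.uniformOfFintype (Fin (t - 1) → F))
      = PMF.uniformOfFintype (Fin m → F) := by
  classical
  -- the linear part as an additive hom
  set L : (Fin (t - 1) → F) →+ (Fin m → F) :=
    { toFun := fun a => fun j => ∑ i : Fin (t - 1), a i * x j ^ ((i : ℕ) + 1)
      map_zero' := by ext j; simp
      map_add' := by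
        intro a b; ext j
        simp [add_mul, Finset.sum_add_distrib] } with hL
  -- surjectivity of L via Lagrange interpolation
  have hsurj : Function.Surjective L := by
    intro y
    set v : Option (Fin m) → F := fun o => o.elim 0 x with hv
    set r : Option (Fin m) → F := fun o => o.elim 0 y with hr
    have hvinj : Set.InjOn v (Finset.univ : Finset (Option (Fin m))) := by
      intro o₁ _ o₂ _ h
      match o₁, o₂ with
      | none, none => rfl
      | none, some j => exact absurd h.symm (hx0 j)
      | some j, none => exact absurd h (hx0 j)
      | some j, some k => exact congrArg some (hinj h)
    set p := Lagrange.interpolate Finset.univ v r with hp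
    have hdeg : p.natDegree < t := by
      have := Lagrange.degree_interpolate_lt r hvinj
      rw [← hp] at this
      simp only [Finset.card_univ, Fintype.card_option, Fintype.card_fin] at this
      by_cases h0 : p = 0
      · simpa [h0] using (show 0 < t by omega)
      · have := (Polynomial.natDegree_lt_iff_degree_lt h0).mpr
          (lt_of_lt_of_le this (by exact_mod_cast Nat.succ_le_of_lt (Nat.lt_of_le_of_lt hm (Nat.sub_lt ht one_pos))))
        exact this
    have heval : ∀ j : Fin m, p.eval (x j) = y j := by
      intro j
      have h := Lagrange.eval_interpolate_at_node r hvinj (Finset.mem_univ (some j))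
      rw [← hp] at h
      simpa only [hv, hr, Option.elim] using h
    have hzero : p.coeff 0 = 0 := by
      have h := Lagrange.eval_interpolate_at_node r hvinj (Finset.mem_univ none)
      rw [← hp] at h
      rw [Polynomial.coeff_zero_eq_eval_zero]
      simpa only [hv, hr, Option.elim] using h
    refine ⟨fun i => p.coeff ((i : ℕ) + 1), ?_⟩
    ext j
    have hev : p.eval (x j) = ∑ i ∈ Finset.range t, p.coeff i * x j ^ i :=
      Polynomial.eval_eq_sum_range' hdeg (x j)
    have ht' : t = (t - 1) + 1 := (Nat.succ_pred_eq_of_pos ht).symm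
    rw [ht', Finset.sum_range_succ'] at hev
    simp only [hL, AddMonoidHom.coe_mk, ZeroHom.coe_mk]
    rw [Fin.sum_univ_eq_sum_range (fun i => p.coeff (i + 1) * x j ^ (i + 1))]
    rw [← heval j, hev, hzero]
    ring
  -- fibers of the full map have size card domain / card codomain
  have key : ∀ y : Fin m → F,
      (Finset.univ.filter (fun a : Fin (t - 1) → F =>
          y = fun j : Fin m => s + ∑ i : Fin (t - 1), a i * x j ^ ((i : ℕ) + 1))).card
        * Fintype.card (Fin m → F) = Fintype.card (Fin (t - 1) → F) := by
    intro y
    have h2 := fiber_card_mul L hsurj (fun j => y j - s)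
    have hset : (Finset.univ.filter (fun a : Fin (t - 1) → F =>
          y = fun j : Fin m => s + ∑ i : Fin (t - 1), a i * x j ^ ((i : ℕ) + 1)))
        = (Finset.univ.filter (fun a => L a = fun j => y j - s)) := by
      apply Finset.filter_congr
      intro a _
      simp only [hL, AddMonoidHom.coe_mk, ZeroHom.coe_mk, funext_iff]
      constructor
      · intro h j; rw [h j]; ring
      · intro h j; rw [h j]; ring
    rw [hset]
    exact h2
  -- conclude
  ext y
  rw [PMF.map_apply, PMF.uniformOfFintype_apply]
  rw [tsum_eq_sum (s := Finset.univ) (fun a ha => absurd (Finset.mem_univ a) ha)]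
  simp only [PMF.uniformOfFintype_apply]
  rw [Finset.sum_ite, Finset.sum_const_zero, add_zero, Finset.sum_const, nsmul_eq_mul]
  have hk := key y
  have hfne : (Finset.univ.filter (fun a : Fin (t - 1) → F =>
      y = fun j : Fin m => s + ∑ i : Fin (t - 1), a i * x j ^ ((i : ℕ) + 1))).card ≠ 0 := by
    intro h0
    rw [h0, zero_mul] at hk
    exact (Fintype.card_ne_zero (α := Fin (t - 1) → F)) hk.symm
  have hcast : ((Finset.univ.filter (fun a : Fin (t - 1) → F =>
      y = fun j : Fin m => s + ∑ i : Fin (t - 1), a i * x j ^ ((i : ℕ) + 1))).card : ENNReal)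
      * (Fintype.card (Fin m → F) : ENNReal) = (Fintype.card (Fin (t - 1) → F) : ENNReal) := by
    exact_mod_cast hk
  rw [← hcast, ENNReal.mul_inv (Or.inl (by exact_mod_cast hfne)) (Or.inl (ENNReal.natCast_ne_top _)),
    ← mul_assoc, ENNReal.mul_inv_cancel (by exact_mod_cast hfne) (ENNReal.natCast_ne_top _), one_mul]
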